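/- arXiv:math/0306064 — 2 statements merged into one kernel-verified Lean document; each statement's English description precedes it below -/
import Mathlib

section
/- Let P and Q be orthogonal projections on a Hilbert space H such that (P - Q)^{2k+1} is trace class for some natural number k. Then for every m ≥ 0, (P - Q)^{2k+1+2m} is trace class and Tr((P - Q)^{2k+1+2m}) = Tr((P - Q)^{2k+1}). -/
open ContinuousLinearMap
open scoped InnerProductSpace NNReal ENNReal

variable {H : Type*} [NormedAddCommGroup H] [InnerProductSpace ℂ H] [CompleteSpace H]

/-- The absolute value `|T| = √(T*T)` of a bounded operator. -/
noncomputable def opAbs (T : H →L[ℂ] H) : H →L[ℂ] H := CFC.sqrt (adjoint T * T)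

/-- A bounded operator is trace class if the diagonal of `|T|` is summable in some
(equivalently, any) Hilbert basis. -/
def IsTraceClass (T : H →L[ℂ] H) : Prop :=
  ∃ (ι : Type) (e : HilbertBasis ι ℂ H), Summable fun i => ⟪e i, opAbs T (e i)⟫_ℂ

/-- `Q∘P` viewed as a linear map `ran P → ran Q`. -/
noncomputable def QPmap (P Q : H →L[ℂ] H) :
    LinearMap.range (P : H →ₗ[ℂ] H) →ₗ[ℂ] LinearMap.range (Q : H →ₗ[ℂ] H) :=
  (Q : H →ₗ[ℂ] H).restrict (p := LinearMap.range (P : H →ₗ[ℂ] H)) (q := LinearMap.range (Q : H →ₗ[ℂ] H))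
    (fun x _ => ⟨x, rfl⟩)

set_option linter.unusedSectionVars false
set_option maxHeartbeats 1000000

variable {ι κ : Type*}

lemma parseval_hasSum (e : HilbertBasis ι ℂ H) (x : H) :
    HasSum (fun i => ‖⟪e i, x⟫_ℂ‖ ^ 2) (‖x‖ ^ 2) := by
  have h := e.hasSum_inner_mul_inner x x
  have h2 : ∀ i, ⟪x, e i⟫_ℂ * ⟪e i, x⟫_ℂ = ((‖⟪e i, x⟫_ℂ‖ ^ 2 : ℝ) : ℂ) := by
    intro i
    rw [← inner_conj_symm x (e i), mul_comm, Complex.mul_conj]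
    rw [Complex.normSq_eq_norm_sq]
  rw [show (⟪x, x⟫_ℂ) = ((‖x‖ ^ 2 : ℝ) : ℂ) from by
    rw [inner_self_eq_norm_sq_to_K]; norm_cast] at h
  simp only [h2] at h
  exact Complex.hasSum_ofReal.mp h

lemma parseval_hasSum_nn (e : HilbertBasis ι ℂ H) (x : H) :
    HasSum (fun i => ‖⟪e i, x⟫_ℂ‖₊ ^ 2) (‖x‖₊ ^ 2) := by
  rw [← NNReal.hasSum_coe]
  push_cast
  exact parseval_hasSum e x

lemma parseval_tsumE (e : HilbertBasis ι ℂ H) (x : H) :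
    ∑' i, (‖⟪e i, x⟫_ℂ‖₊ : ℝ≥0∞) ^ 2 = (‖x‖₊ : ℝ≥0∞) ^ 2 := by
  have h := ENNReal.tsum_coe_eq (parseval_hasSum_nn e x)
  push_cast at h ⊢
  exact h

noncomputable def hsE (e : HilbertBasis ι ℂ H) (A : H →L[ℂ] H) : ℝ≥0∞ :=
  ∑' i, (‖A (e i)‖₊ : ℝ≥0∞) ^ 2

lemma hsE_adj (e : HilbertBasis ι ℂ H) (f : HilbertBasis κ ℂ H) (A : H →L[ℂ] H) :
    hsE e A = hsE f (adjoint A) := by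
  calc hsE e A = ∑' i, ∑' j, (‖⟪f j, A (e i)⟫_ℂ‖₊ : ℝ≥0∞) ^ 2 :=
        tsum_congr fun i => (parseval_tsumE f _).symm
    _ = ∑' j, ∑' i, (‖⟪f j, A (e i)⟫_ℂ‖₊ : ℝ≥0∞) ^ 2 := ENNReal.tsum_comm
    _ = ∑' j, ∑' i, (‖⟪e i, adjoint A (f j)⟫_ℂ‖₊ : ℝ≥0∞) ^ 2 := by
        refine tsum_congr fun j => tsum_congr fun i => ?_
        congr 2
        rw [← nnnorm_norm, ← nnnorm_norm ((⟪_, _⟫_ℂ)),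
          show ⟪f j, A (e i)⟫_ℂ = ⟪adjoint A (f j), e i⟫_ℂ from
            (adjoint_inner_left A (e i) (f j)).symm, norm_inner_symm]
    _ = hsE f (adjoint A) := tsum_congr fun j => parseval_tsumE e _

lemma hsE_basis (e : HilbertBasis ι ℂ H) (f : HilbertBasis κ ℂ H) (A : H →L[ℂ] H) :
    hsE e A = hsE f A := by
  rw [hsE_adj e f A, hsE_adj f f (adjoint A), adjoint_adjoint]

lemma summable_norm_sq_iff (e : HilbertBasis ι ℂ H) (C : H →L[ℂ] H) :
    Summable (fun i => ‖C (e i)‖ ^ 2) ↔ hsE e C ≠ ⊤ := by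
  unfold hsE
  rw [show (fun i => ‖C (e i)‖ ^ 2) = (fun i => ((‖C (e i)‖₊ ^ 2 : ℝ≥0) : ℝ)) from by
    ext i; push_cast; ring]
  rw [NNReal.summable_coe]
  rw [show (fun i => (‖C (e i)‖₊ : ℝ≥0∞) ^ 2) = (fun i => ((‖C (e i)‖₊ ^ 2 : ℝ≥0) : ℝ≥0∞)) from by
    ext i; push_cast; ring]
  exact ENNReal.tsum_coe_ne_top_iff_summable.symm

lemma summable_inner_of_hsE (e : HilbertBasis ι ℂ H) (C D : H →L[ℂ] H)
    (hC : hsE e C ≠ ⊤) (hD : hsE e D ≠ ⊤) :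
    Summable fun i => ⟪C (e i), D (e i)⟫_ℂ := by
  refine Summable.of_norm (Summable.of_nonneg_of_le (fun i => norm_nonneg _) (fun i => ?_)
    ((((summable_norm_sq_iff e C).mpr hC)).add ((summable_norm_sq_iff e D).mpr hD)))
  calc ‖⟪C (e i), D (e i)⟫_ℂ‖ ≤ ‖C (e i)‖ * ‖D (e i)‖ := norm_inner_le_norm _ _
    _ ≤ ‖C (e i)‖ ^ 2 + ‖D (e i)‖ ^ 2 := by nlinarith [norm_nonneg (C (e i)), norm_nonneg (D (e i))]
set_option linter.unusedSectionVars false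

lemma hsE_summable_norm_sq (e : HilbertBasis ι ℂ H) (C : H →L[ℂ] H) (h : hsE e C ≠ ⊤) :
    Summable (fun i => ‖C (e i)‖ ^ 2) := (summable_norm_sq_iff e C).mpr h

lemma trace_cyclic (e : HilbertBasis ι ℂ H) (U V : H →L[ℂ] H)
    (hU : hsE e (adjoint U) ≠ ⊤) (hV : hsE e V ≠ ⊤) :
    ∑' i, ⟪e i, (U * V) (e i)⟫_ℂ = ∑' j, ⟪e j, (V * U) (e j)⟫_ℂ := by
  set F : ι → ι → ℂ := fun i j => ⟪adjoint U (e i), e j⟫_ℂ * ⟪e j, V (e i)⟫_ℂ with hF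
  have hFn : Summable (fun p : ι × ι => ‖Function.uncurry F p‖) := by
    refine Summable.of_nonneg_of_le (fun p => norm_nonneg _) (fun p => ?_) ?_
      (f := fun p : ι × ι =>
        ‖⟪e p.2, adjoint U (e p.1)⟫_ℂ‖ ^ 2 + ‖⟪e p.2, V (e p.1)⟫_ℂ‖ ^ 2)
    · obtain ⟨i, j⟩ := p
      simp only [Function.uncurry, hF, norm_mul]
      rw [norm_inner_symm (adjoint U (e i))]
      set a := ‖⟪e j, adjoint U (e i)⟫_ℂ‖
      set b := ‖⟪e j, V (e i)⟫_ℂ‖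
      nlinarith [norm_nonneg (⟪e j, adjoint U (e i)⟫_ℂ), norm_nonneg (⟪e j, V (e i)⟫_ℂ)]
    · apply Summable.add
      · refine (summable_prod_of_nonneg (fun p => by positivity)).mpr
          ⟨fun i => (parseval_hasSum e (adjoint U (e i))).summable, ?_⟩
        refine Summable.congr (hsE_summable_norm_sq e (adjoint U) hU) fun i => ?_
        exact ((parseval_hasSum e (adjoint U (e i))).tsum_eq).symm
      · refine (summable_prod_of_nonneg (fun p => by positivity)).mpr
          ⟨fun i => (parseval_hasSum e (V (e i))).summable, ?_⟩
        refine Summable.congr (hsE_summable_norm_sq e V hV) fun i => ?_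
        exact ((parseval_hasSum e (V (e i))).tsum_eq).symm
  have hFs : Summable (Function.uncurry F) := Summable.of_norm hFn
  calc ∑' i, ⟪e i, (U * V) (e i)⟫_ℂ = ∑' i, ∑' j, F i j := by
        refine tsum_congr fun i => ?_
        rw [mul_apply_eq_comp, ← adjoint_inner_left U]
        exact ((e.hasSum_inner_mul_inner (adjoint U (e i)) (V (e i))).tsum_eq).symm
    _ = ∑' j, ∑' i, F i j := (Summable.tsum_comm hFs).symm
    _ = ∑' j, ⟪e j, (V * U) (e j)⟫_ℂ := by
        refine tsum_congr fun j => ?_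
        have hterm : ∀ i, F i j = ⟪adjoint V (e j), e i⟫_ℂ * ⟪e i, U (e j)⟫_ℂ := by
          intro i
          simp only [hF]
          rw [adjoint_inner_left U, ← adjoint_inner_left V]
          ring
        rw [tsum_congr hterm, (e.hasSum_inner_mul_inner (adjoint V (e j)) (U (e j))).tsum_eq,
          mul_apply_eq_comp, adjoint_inner_left]

lemma hsE_mono (e : HilbertBasis ι ℂ H) {C D : H →L[ℂ] H} (h : ∀ x, ‖D x‖ ≤ ‖C x‖) :
    hsE e D ≤ hsE e C := by
  refine ENNReal.tsum_le_tsum fun i => ?_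
  gcongr
  exact h (e i)

noncomputable def oddSqrt (t : ℝ) : ℝ := Real.sqrt t - Real.sqrt (-t)

@[fun_prop]
lemma continuous_oddSqrt : Continuous oddSqrt := by
  unfold oddSqrt; fun_prop

lemma oddSqrt_mul_sqrt_abs (t : ℝ) : oddSqrt t * Real.sqrt |t| = t := by
  unfold oddSqrt
  rcases le_total 0 t with h | h
  · have h2 : Real.sqrt (-t) = 0 := Real.sqrt_eq_zero'.mpr (by linarith)
    rw [abs_of_nonneg h, h2, sub_zero, Real.mul_self_sqrt h]
  · have h2 : Real.sqrt t = 0 := Real.sqrt_eq_zero'.mpr (by linarith)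
    rw [abs_of_nonpos h, h2, zero_sub, neg_mul, Real.mul_self_sqrt (by linarith), neg_neg]

lemma oddSqrt_mul_self (t : ℝ) : oddSqrt t * oddSqrt t = |t| := by
  unfold oddSqrt
  rcases le_total 0 t with h | h
  · have h2 : Real.sqrt (-t) = 0 := Real.sqrt_eq_zero'.mpr (by linarith)
    rw [h2, sub_zero, Real.mul_self_sqrt h, abs_of_nonneg h]
  · have h2 : Real.sqrt t = 0 := Real.sqrt_eq_zero'.mpr (by linarith)
    rw [h2, zero_sub, neg_mul_neg, Real.mul_self_sqrt (by linarith), abs_of_nonpos h]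

noncomputable def gf (j : ℕ) (t : ℝ) : ℝ := oddSqrt t * |t| ^ j
noncomputable def hf (j : ℕ) (t : ℝ) : ℝ := Real.sqrt |t| * |t| ^ j

@[fun_prop]
lemma continuous_gf (j : ℕ) : Continuous (gf j) := by
  unfold gf; exact continuous_oddSqrt.mul (by fun_prop)

@[fun_prop]
lemma continuous_hf (j : ℕ) : Continuous (hf j) := by
  unfold hf; fun_prop

lemma hf_nonneg (j : ℕ) (t : ℝ) : 0 ≤ hf j t := by
  unfold hf; positivity

lemma gf_mul_hf (j : ℕ) (t : ℝ) : gf j t * hf j t = t ^ (2 * j + 1) := by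
  unfold gf hf
  calc oddSqrt t * |t| ^ j * (Real.sqrt |t| * |t| ^ j)
      = (oddSqrt t * Real.sqrt |t|) * (|t| ^ 2) ^ j := by ring
    _ = t * (t ^ 2) ^ j := by rw [oddSqrt_mul_sqrt_abs, sq_abs]
    _ = t ^ (2 * j + 1) := by rw [← pow_mul]; ring

lemma gf_mul_gf (j : ℕ) (t : ℝ) : gf j t * gf j t = |t| ^ (2 * j + 1) := by
  unfold gf
  calc oddSqrt t * |t| ^ j * (oddSqrt t * |t| ^ j)
      = (oddSqrt t * oddSqrt t) * (|t| ^ 2) ^ j := by ring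
    _ = |t| * (|t| ^ 2) ^ j := by rw [oddSqrt_mul_self]
    _ = |t| ^ (2 * j + 1) := by rw [← pow_mul]; ring

lemma hf_mul_hf (j : ℕ) (t : ℝ) : hf j t * hf j t = |t| ^ (2 * j + 1) := by
  unfold hf
  calc Real.sqrt |t| * |t| ^ j * (Real.sqrt |t| * |t| ^ j)
      = (Real.sqrt |t| * Real.sqrt |t|) * (|t| ^ 2) ^ j := by ring
    _ = |t| * (|t| ^ 2) ^ j := by rw [Real.mul_self_sqrt (abs_nonneg t)]
    _ = |t| ^ (2 * j + 1) := by rw [← pow_mul]; ring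

lemma abs_pow_eq_pow_even (N : ℕ) (t : ℝ) : |t| ^ N * |t| ^ N = t ^ N * t ^ N := by
  calc |t| ^ N * |t| ^ N = (|t| ^ 2) ^ N := by ring
    _ = (t ^ 2) ^ N := by rw [sq_abs]
    _ = t ^ N * t ^ N := by ring

lemma inner_selfadjoint_sq (C : H →L[ℂ] H) (hC : IsSelfAdjoint C) (x : H) :
    ⟪x, (C * C) x⟫_ℂ = ((‖C x‖ ^ 2 : ℝ) : ℂ) := by
  rw [mul_apply_eq_comp, ← adjoint_inner_left C (C x) x, hC.adjoint_eq, inner_self_eq_norm_sq_to_K]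
  norm_cast

section CFCPart

variable (T : H →L[ℂ] H) (hT : IsSelfAdjoint T)

include hT

lemma cfc_gf_mul_hf (j : ℕ) : cfc (gf j) T * cfc (hf j) T = T ^ (2 * j + 1) := by
  rw [← cfc_mul (gf j) (hf j) T, cfc_congr (g := fun t : ℝ => t ^ (2 * j + 1))
    (fun t _ => gf_mul_hf j t), cfc_pow_id T]

lemma cfc_gf_mul_gf (j : ℕ) :
    cfc (gf j) T * cfc (gf j) T = cfc (fun t : ℝ => |t| ^ (2 * j + 1)) T := by
  rw [← cfc_mul (gf j) (gf j) T]
  exact cfc_congr (fun t _ => gf_mul_gf j t)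

lemma cfc_hf_mul_hf (j : ℕ) :
    cfc (hf j) T * cfc (hf j) T = cfc (fun t : ℝ => |t| ^ (2 * j + 1)) T := by
  rw [← cfc_mul (hf j) (hf j) T]
  exact cfc_congr (fun t _ => hf_mul_hf j t)

lemma opAbs_pow_odd (j : ℕ) :
    opAbs (T ^ (2 * j + 1)) = cfc (fun t : ℝ => |t| ^ (2 * j + 1)) T := by
  unfold opAbs
  have h1 : adjoint (T ^ (2 * j + 1)) = T ^ (2 * j + 1) := by
    rw [← star_eq_adjoint]; exact hT.pow _
  rw [h1]
  refine CFC.sqrt_unique ?_ (cfc_nonneg fun t _ => by positivity)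
  calc cfc (fun t : ℝ => |t| ^ (2*j+1)) T * cfc (fun t : ℝ => |t| ^ (2*j+1)) T
      = cfc (fun t : ℝ => |t| ^ (2*j+1) * |t| ^ (2*j+1)) T := (cfc_mul _ _ T).symm
    _ = cfc (fun t : ℝ => t ^ (2*j+1) * t ^ (2*j+1)) T :=
        cfc_congr (fun t _ => abs_pow_eq_pow_even _ t)
    _ = cfc (fun t : ℝ => t ^ (2*j+1)) T * cfc (fun t : ℝ => t ^ (2*j+1)) T := cfc_mul _ _ T
    _ = T ^ (2*j+1) * T ^ (2*j+1) := by rw [cfc_pow_id T]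

lemma cfc_one_sub_sq : (1 : H →L[ℂ] H) - T * T = cfc (fun t : ℝ => 1 - t * t) T := by
  rw [cfc_sub (fun _ : ℝ => 1) (fun t : ℝ => t * t) T, cfc_const_one ℝ T,
    cfc_mul (fun t : ℝ => t) (fun t : ℝ => t) T, cfc_id' ℝ T]

end CFCPart

theorem stmt6 [TopologicalSpace.SeparableSpace H]
    (P Q : H →L[ℂ] H) (hP1 : adjoint P = P) (hP2 : P * P = P)
    (hQ1 : adjoint Q = Q) (hQ2 : Q * Q = Q) (k : ℕ)
    (htc : IsTraceClass ((P - Q) ^ (2 * k + 1))) :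
    ∀ m : ℕ, IsTraceClass ((P - Q) ^ (2 * k + 1 + 2 * m)) ∧
      ∀ (ι : Type) (e : HilbertBasis ι ℂ H),
        ∑' i, ⟪e i, ((P - Q) ^ (2 * k + 1 + 2 * m)) (e i)⟫_ℂ =
        ∑' i, ⟪e i, ((P - Q) ^ (2 * k + 1)) (e i)⟫_ℂ := by
  classical
  obtain ⟨ι₀, e₀, he₀⟩ := htc
  set T : H →L[ℂ] H := P - Q with hTdef
  set B : H →L[ℂ] H := 1 - P - Q with hBdef
  have hP : IsSelfAdjoint P := (star_eq_adjoint P).trans hP1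
  have hQ : IsSelfAdjoint Q := (star_eq_adjoint Q).trans hQ1
  have hT : IsSelfAdjoint T := hP.sub hQ
  have hB : IsSelfAdjoint B := ((IsSelfAdjoint.one (H →L[ℂ] H)).sub hP).sub hQ
  have hTB : T * B = -(B * T) := by
    simp only [hTdef, hBdef, sub_mul, mul_sub, mul_one, one_mul, hP2, hQ2]
    abel
  have hB2 : B * B = 1 - T * T := by
    simp only [hTdef, hBdef, sub_mul, mul_sub, mul_one, one_mul, hP2, hQ2]
    abel
  have hTT1 : T * T + B * B = 1 := by rw [hB2]; abel
  have hnorm : ∀ x : H, ‖T x‖ ^ 2 + ‖B x‖ ^ 2 = ‖x‖ ^ 2 := by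
    intro x
    have hTT : ⟪x, (T * T) x⟫_ℂ = ((‖T x‖ ^ 2 : ℝ) : ℂ) := inner_selfadjoint_sq T hT x
    have hBB : ⟪x, (B * B) x⟫_ℂ = ((‖B x‖ ^ 2 : ℝ) : ℂ) := inner_selfadjoint_sq B hB x
    have hsum : (T * T) x + (B * B) x = x := by
      have h1 : (T * T) x + (B * B) x = (T * T + B * B) x := (add_apply _ _ _).symm
      rw [h1, hTT1, one_apply_eq_self]
    have h2 : ⟪x, (T * T) x⟫_ℂ + ⟪x, (B * B) x⟫_ℂ = ⟪x, x⟫_ℂ := by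
      rw [← inner_add_right, hsum]
    rw [hTT, hBB, inner_self_eq_norm_sq_to_K] at h2
    norm_cast at h2
    exact RCLike.ofReal_inj.mp h2
  have hBle : ∀ x : H, ‖B x‖ ≤ ‖x‖ := by
    intro x
    nlinarith [hnorm x, norm_nonneg (T x), norm_nonneg (B x), norm_nonneg x]
  have hTle : ∀ x : H, ‖T x‖ ≤ ‖x‖ := by
    intro x
    nlinarith [hnorm x, norm_nonneg (T x), norm_nonneg (B x), norm_nonneg x]
  have hspec : ∀ r ∈ spectrum ℝ T, |r| ≤ 1 := by
    rcases subsingleton_or_nontrivial H with hH | hH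
    · intro r hr
      exfalso
      haveI : Subsingleton (H →L[ℂ] H) := ⟨fun a b => by ext x; exact Subsingleton.elim _ _⟩
      rw [spectrum.mem_iff] at hr
      exact hr (isUnit_of_subsingleton _)
    · intro r hr
      haveI : NormOneClass (H →L[ℂ] H) := ⟨by rw [ContinuousLinearMap.one_def]; exact norm_id⟩
      have hT1 : ‖T‖ ≤ 1 := T.opNorm_le_bound zero_le_one (fun x => by simpa using hTle x)
      have h2 : (algebraMap ℝ ℂ r) ∈ spectrum ℂ T := spectrum.algebraMap_mem ℂ hr
      have h3 := spectrum.norm_le_norm_of_mem h2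
      simpa using h3.trans hT1
  -- cfc operators
  set Aop : ℕ → (H →L[ℂ] H) := fun N => cfc (fun t : ℝ => |t| ^ N) T with hAdef
  set Gop : ℕ → (H →L[ℂ] H) := fun j => cfc (gf j) T with hGdef
  set Hop : ℕ → (H →L[ℂ] H) := fun j => cfc (hf j) T with hHdef
  have hHsa : ∀ j, IsSelfAdjoint (Hop j) := fun j => cfc_predicate _ _
  have hGsa : ∀ j, IsSelfAdjoint (Gop j) := fun j => cfc_predicate _ _
  have hGH : ∀ j, Gop j * Hop j = T ^ (2 * j + 1) := fun j => cfc_gf_mul_hf T hT j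
  have hGG : ∀ j, Gop j * Gop j = Aop (2 * j + 1) := fun j => cfc_gf_mul_gf T hT j
  have hHH : ∀ j, Hop j * Hop j = Aop (2 * j + 1) := fun j => cfc_hf_mul_hf T hT j
  have habs : ∀ j, opAbs (T ^ (2 * j + 1)) = Aop (2 * j + 1) := fun j => opAbs_pow_odd T hT j
  have hdiagH : ∀ j x, ⟪x, (Aop (2 * j + 1)) x⟫_ℂ = ((‖Hop j x‖ ^ 2 : ℝ) : ℂ) := by
    intro j x
    rw [← hHH j]
    exact inner_selfadjoint_sq _ (hHsa j) x
  have hnormGH : ∀ j x, ‖Gop j x‖ = ‖Hop j x‖ := by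
    intro j x
    have h1 : ((‖Gop j x‖ ^ 2 : ℝ) : ℂ) = ((‖Hop j x‖ ^ 2 : ℝ) : ℂ) := by
      rw [← inner_selfadjoint_sq _ (hGsa j) x, ← inner_selfadjoint_sq _ (hHsa j) x, hGG, hHH]
    have h2 : ‖Gop j x‖ ^ 2 = ‖Hop j x‖ ^ 2 := by exact_mod_cast h1
    nlinarith [norm_nonneg (Gop j x), norm_nonneg (Hop j x)]
  -- trace class data
  have hsE_H0 : hsE e₀ (Hop k) ≠ ⊤ := by
    rw [habs k] at he₀
    rw [show (fun i => ⟪e₀ i, (Aop (2 * k + 1)) (e₀ i)⟫_ℂ)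
        = fun i => ((‖Hop k (e₀ i)‖ ^ 2 : ℝ) : ℂ) from funext fun i => hdiagH k (e₀ i)] at he₀
    exact (summable_norm_sq_iff e₀ (Hop k)).mp (Complex.summable_ofReal.mp he₀)
  have hsE_H : ∀ (j : ℕ) (ι' : Type) (e : HilbertBasis ι' ℂ H), k ≤ j → hsE e (Hop j) ≠ ⊤ := by
    intro j ι' e hkj
    have hmono : Aop (2 * j + 1) ≤ Aop (2 * k + 1) := by
      refine cfc_mono (fun t ht => pow_le_pow_of_le_one (abs_nonneg t) (hspec t ht) (by omega))
        ?_ ?_ <;> fun_prop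
    have hpt : ∀ x, ‖Hop j x‖ ≤ ‖Hop k x‖ := by
      intro x
      have h0 : (0 : H →L[ℂ] H) ≤ Aop (2 * k + 1) - Aop (2 * j + 1) := sub_nonneg.mpr hmono
      have h1 := ((nonneg_iff_isPositive _).mp h0).re_inner_nonneg_right x
      rw [sub_apply, inner_sub_right, map_sub] at h1
      have h2 : RCLike.re (⟪x, Aop (2 * k + 1) x⟫_ℂ) = ‖Hop k x‖ ^ 2 := by
        rw [hdiagH]; exact Complex.ofReal_re _
      have h3 : RCLike.re (⟪x, Aop (2 * j + 1) x⟫_ℂ) = ‖Hop j x‖ ^ 2 := by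
        rw [hdiagH]; exact Complex.ofReal_re _
      rw [h2, h3] at h1
      nlinarith [norm_nonneg (Hop j x), norm_nonneg (Hop k x)]
    have hle : hsE e (Hop j) ≤ hsE e (Hop k) := hsE_mono e hpt
    have h3 : hsE e (Hop k) ≠ ⊤ := by rw [hsE_basis e e₀]; exact hsE_H0
    exact ne_top_of_le_ne_top h3 hle
  have hsE_GH : ∀ (j : ℕ) (ι' : Type) (e : HilbertBasis ι' ℂ H),
      hsE e (Gop j) = hsE e (Hop j) := by
    intro j ι' e
    refine tsum_congr fun i => ?_
    rw [show ‖Gop j (e i)‖₊ = ‖Hop j (e i)‖₊ from NNReal.coe_injective (by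
      simp only [coe_nnnorm]; exact hnormGH j (e i))]
  have hsE_G : ∀ (j : ℕ) (ι' : Type) (e : HilbertBasis ι' ℂ H), k ≤ j → hsE e (Gop j) ≠ ⊤ := by
    intro j ι' e hkj
    rw [hsE_GH j ι' e]
    exact hsE_H j ι' e hkj
  -- summable diagonal
  have hdiagT : ∀ (j : ℕ) (x : H), ⟪x, (T ^ (2 * j + 1)) x⟫_ℂ = ⟪Gop j x, Hop j x⟫_ℂ := by
    intro j x
    rw [← hGH j, mul_apply_eq_comp, ← adjoint_inner_left (Gop j), (hGsa j).adjoint_eq]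
  have hsum_diag : ∀ (j : ℕ) (ι' : Type) (e : HilbertBasis ι' ℂ H), k ≤ j →
      Summable (fun i => ⟪e i, (T ^ (2 * j + 1)) (e i)⟫_ℂ) := by
    intro j ι' e hkj
    exact (summable_inner_of_hsE e _ _ (hsE_G j ι' e hkj) (hsE_H j ι' e hkj)).congr
      (fun i => (hdiagT j (e i)).symm)
  -- anticommutation for odd powers
  have hTBX : ∀ X : H →L[ℂ] H, T * (B * X) = -(B * (T * X)) := by
    intro X
    rw [← mul_assoc, hTB, neg_mul, mul_assoc]
  have hpowBX : ∀ (j : ℕ) (X : H →L[ℂ] H),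
      T ^ (2 * j + 1) * (B * X) = -(B * (T ^ (2 * j + 1) * X)) := by
    intro j
    induction j with
    | zero => intro X; simpa using hTBX X
    | succ n ih =>
        intro X
        rw [show 2 * (n + 1) + 1 = (2 * n + 1) + 1 + 1 from by ring, pow_succ, pow_succ]
        simp only [mul_assoc]
        rw [hTBX, mul_neg, mul_neg, hTBX, mul_neg, neg_neg, ih (T * (T * X))]
  have hpowB : ∀ j : ℕ, T ^ (2 * j + 1) * B = -(B * T ^ (2 * j + 1)) := by
    intro j
    simpa using hpowBX j 1
  -- products
  have hUV : ∀ j, (B * Gop j) * (Hop j * B) = B * T ^ (2 * j + 1) * B := by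
    intro j
    calc (B * Gop j) * (Hop j * B) = B * (Gop j * Hop j) * B := by
          simp only [mul_assoc]
      _ = B * T ^ (2 * j + 1) * B := by rw [hGH]
  have hVU : ∀ j, (Hop j * B) * (B * Gop j) = T ^ (2 * j + 1) - T ^ (2 * (j + 1) + 1) := by
    intro j
    have h1 : (Hop j * B) * (B * Gop j) = Hop j * ((1 - T * T) * Gop j) := by
      rw [← hB2]
      simp only [mul_assoc]
    rw [h1, cfc_one_sub_sq T hT, hHdef, hGdef]
    rw [← cfc_mul (fun t : ℝ => 1 - t * t) (gf j) T, ← cfc_mul (hf j) _ T]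
    rw [cfc_congr (g := fun t : ℝ => t ^ (2 * j + 1) - t ^ (2 * (j + 1) + 1)) (fun t _ => by
      have h := gf_mul_hf j t
      calc hf j t * ((1 - t * t) * gf j t) = (gf j t * hf j t) * (1 - t * t) := by ring
        _ = t ^ (2 * j + 1) * (1 - t * t) := by rw [h]
        _ = t ^ (2 * j + 1) - t ^ (2 * (j + 1) + 1) := by ring)]
    rw [cfc_sub (fun t : ℝ => t ^ (2 * j + 1)) (fun t : ℝ => t ^ (2 * (j + 1) + 1)) T,
      cfc_pow_id T, cfc_pow_id T]
  have hUVneg : ∀ j, (Hop j * B) * (B * Gop j) = -((B * Gop j) * (Hop j * B)) := by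
    intro j
    rw [hUV j, hVU j]
    have h1 : B * T ^ (2 * j + 1) = -(T ^ (2 * j + 1) * B) := by rw [hpowB j, neg_neg]
    rw [h1, neg_mul, mul_assoc, hB2]
    rw [mul_sub, mul_one]
    rw [show T ^ (2 * j + 1) * (T * T) = T ^ (2 * (j + 1) + 1) from by
      rw [show 2 * (j + 1) + 1 = (2 * j + 1) + 2 from by ring, pow_add T (2 * j + 1) 2, pow_two]]
    abel
  -- the main step
  have hstep : ∀ (j : ℕ), k ≤ j → ∀ (ι' : Type) (e : HilbertBasis ι' ℂ H),
      ∑' i, ⟪e i, (T ^ (2 * (j + 1) + 1)) (e i)⟫_ℂ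
        = ∑' i, ⟪e i, (T ^ (2 * j + 1)) (e i)⟫_ℂ := by
    intro j hkj ι' e
    set U := B * Gop j with hUdef
    set V := Hop j * B with hVdef
    have hGfin := hsE_G j ι' e hkj
    have hHfin := hsE_H j ι' e hkj
    have hUfin : hsE e U ≠ ⊤ :=
      ne_top_of_le_ne_top hGfin (hsE_mono e fun x => by
        simp only [hUdef, mul_apply]; exact hBle _)
    have hUadjfin : hsE e (adjoint U) ≠ ⊤ := by
      rw [hsE_adj e e (adjoint U), adjoint_adjoint]; exact hUfin
    have hVadj : adjoint V = B * Hop j := by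
      rw [← star_eq_adjoint, hVdef, star_mul, hB.star_eq, (hHsa j).star_eq]
    have hVfin : hsE e V ≠ ⊤ := by
      rw [hsE_adj e e V, hVadj]
      exact ne_top_of_le_ne_top hHfin (hsE_mono e fun x => by
        simp only [mul_apply_eq_comp]; exact hBle _)
    have hcyc := trace_cyclic e U V hUadjfin hVfin
    have hneg : ∑' i, ⟪e i, (V * U) (e i)⟫_ℂ = -∑' i, ⟪e i, (U * V) (e i)⟫_ℂ := by
      rw [hUVneg j, ← tsum_neg]
      exact tsum_congr fun i => by rw [neg_apply, inner_neg_right]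
    have hzero : ∑' i, ⟪e i, (V * U) (e i)⟫_ℂ = 0 := by
      have h5 : ∑' i, ⟪e i, (V * U) (e i)⟫_ℂ = -∑' i, ⟪e i, (V * U) (e i)⟫_ℂ := by
        nth_rewrite 1 [hneg, hcyc]
        rfl
      have h6 : (∑' i, ⟪e i, (V * U) (e i)⟫_ℂ) + (∑' i, ⟪e i, (V * U) (e i)⟫_ℂ) = 0 := by
        nth_rewrite 2 [h5]
        ring
      exact add_self_eq_zero.mp h6
    have hsplit : ∑' i, ⟪e i, (V * U) (e i)⟫_ℂ
        = (∑' i, ⟪e i, (T ^ (2 * j + 1)) (e i)⟫_ℂ)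
          - ∑' i, ⟪e i, (T ^ (2 * (j + 1) + 1)) (e i)⟫_ℂ := by
      rw [show V * U = T ^ (2 * j + 1) - T ^ (2 * (j + 1) + 1) from hVU j]
      rw [← Summable.tsum_sub (hsum_diag j ι' e hkj) (hsum_diag (j + 1) ι' e (by omega))]
      exact tsum_congr fun i => by rw [sub_apply, inner_sub_right]
    rw [hsplit] at hzero
    exact (sub_eq_zero.mp hzero).symm
  -- induction on m
  have hmain : ∀ (m : ℕ) (ι' : Type) (e : HilbertBasis ι' ℂ H),
      ∑' i, ⟪e i, (T ^ (2 * (k + m) + 1)) (e i)⟫_ℂ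
        = ∑' i, ⟪e i, (T ^ (2 * k + 1)) (e i)⟫_ℂ := by
    intro m
    induction m with
    | zero => intro ι' e; rfl
    | succ n ih =>
        intro ι' e
        have h1 := hstep (k + n) (by omega) ι' e
        rw [show k + (n + 1) = (k + n) + 1 from by ring]
        exact h1.trans (ih ι' e)
  intro m
  have hexp : 2 * k + 1 + 2 * m = 2 * (k + m) + 1 := by ring
  constructor
  · refine ⟨ι₀, e₀, ?_⟩
    rw [show T ^ (2 * k + 1 + 2 * m) = T ^ (2 * (k + m) + 1) from by rw [hexp]]
    rw [habs (k + m)]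
    rw [show (fun i => ⟪e₀ i, (Aop (2 * (k + m) + 1)) (e₀ i)⟫_ℂ)
        = fun i => ((‖Hop (k + m) (e₀ i)‖ ^ 2 : ℝ) : ℂ) from funext fun i => hdiagH _ _]
    rw [Complex.summable_ofReal]
    exact (summable_norm_sq_iff e₀ _).mpr (hsE_H (k + m) ι₀ e₀ (by omega))
  · intro ι e
    rw [show T ^ (2 * k + 1 + 2 * m) = T ^ (2 * (k + m) + 1) from by rw [hexp]]
    exact hmain m ι e
end

section
/- Let P and Q be orthogonal projections on a Hilbert space H with P - Q compact. Then the operator QP, restricted to a map from ran(P) to ran(Q), is a Fredholm operator. -/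
open ContinuousLinearMap
open scoped InnerProductSpace

variable {H : Type*} [NormedAddCommGroup H] [InnerProductSpace ℂ H] [CompleteSpace H]

section Aux

variable {G : Type*} [NormedAddCommGroup G] [InnerProductSpace ℂ G] [CompleteSpace G]

/-- Riesz theory, kernel part: `ker (1 - K)` is finite dimensional when `K` is compact. -/
lemma aux_ker_fd (K : G →L[ℂ] G) (hK : IsCompactOperator ⇑K) :
    FiniteDimensional ℂ (LinearMap.ker (1 - K).toLinearMap) := by
  obtain ⟨S, hScpt, hS⟩ := hK.image_closedBall_subset_compact 1
  set N : Submodule ℂ G := LinearMap.ker (1 - K).toLinearMap with hN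
  have hker : ∀ x : G, x ∈ N → K x = x := by
    intro x hx
    have h : (1 - K) x = 0 := hx
    have h' : x - K x = 0 := by simpa using h
    rw [sub_eq_zero] at h'
    exact h'.symm
  have hclosedball : IsCompact (Metric.closedBall (0 : N) 1) := by
    rw [Subtype.isCompact_iff]
    apply hScpt.of_isClosed_subset
    · have himg : Subtype.val '' Metric.closedBall (0 : N) 1
          = (N : Set G) ∩ Metric.closedBall (0 : G) 1 := by
        ext x
        constructor
        · rintro ⟨y, hy, rfl⟩
          rw [Metric.mem_closedBall, dist_zero_right] at hy
          exact ⟨y.2, by rwa [Metric.mem_closedBall, dist_zero_right]⟩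
        · rintro ⟨hx1, hx2⟩
          rw [Metric.mem_closedBall, dist_zero_right] at hx2
          exact ⟨⟨x, hx1⟩, by rwa [Metric.mem_closedBall, dist_zero_right], rfl⟩
      rw [himg]
      exact (isClosed_ker (1 - K)).inter Metric.isClosed_closedBall
    · rintro x ⟨y, hy, rfl⟩
      rw [Metric.mem_closedBall, dist_zero_right] at hy
      have h1 : ‖(y : G)‖ ≤ 1 := hy
      have h2 := hker (y : G) y.2
      exact hS ⟨(y : G), by rwa [Metric.mem_closedBall, dist_zero_right], h2⟩
  exact FiniteDimensional.of_isCompact_closedBall₀ ℂ one_pos hclosedball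

/-- Riesz theory, cokernel part (for symmetric `1 - K`): the cokernel of `1 - K` is
finite dimensional when `K` is compact. -/
lemma aux_coker_fd (K : G →L[ℂ] G) (hK : IsCompactOperator ⇑K)
    (hsym : ∀ x y : G, ⟪(1 - K) x, y⟫_ℂ = ⟪x, (1 - K) y⟫_ℂ) :
    FiniteDimensional ℂ (G ⧸ LinearMap.range (1 - K : G →L[ℂ] G).toLinearMap) := by
  set D : G →L[ℂ] G := 1 - K with hD
  haveI hNfd : FiniteDimensional ℂ (LinearMap.ker D.toLinearMap) := aux_ker_fd K hK
  set N : Submodule ℂ G := LinearMap.ker D.toLinearMap with hNdef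
  set M : Submodule ℂ G := Nᗮ with hMdef
  obtain ⟨S, hScpt, hS⟩ := hK.image_closedBall_subset_compact 1
  -- D is bounded below on M
  have hbb : ∃ c : ℝ, 0 < c ∧ ∀ x : G, x ∈ M → c * ‖x‖ ≤ ‖D x‖ := by
    by_contra hc
    push_neg at hc
    have key : ∀ n : ℕ, ∃ u : G, u ∈ M ∧ ‖u‖ = 1 ∧ ‖D u‖ < 1 / (n + 1) := by
      intro n
      obtain ⟨x, hxM, hx⟩ := hc (1 / (n + 1)) (by positivity)
      have hx0 : x ≠ 0 := by
        rintro rfl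
        simp at hx
      have hxn : ‖x‖ ≠ 0 := norm_ne_zero_iff.mpr hx0
      refine ⟨‖x‖⁻¹ • x, M.smul_mem _ hxM, ?_, ?_⟩
      · rw [norm_smul, norm_inv, norm_norm, inv_mul_cancel₀ hxn]
      · rw [D.map_smul_of_tower, norm_smul, norm_inv, norm_norm]
        rw [inv_mul_lt_iff₀ (by positivity)]
        calc ‖D x‖ < 1 / (n + 1) * ‖x‖ := hx
        _ = ‖x‖ * (1 / (n + 1)) := by ring
    choose u huM hu1 huD using key
    have huball : ∀ n, K (u n) ∈ S := fun n =>
      hS ⟨u n, by simp [Metric.mem_closedBall, dist_zero_right, hu1 n], rfl⟩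
    obtain ⟨y, _, φ, hφ, hconv⟩ := hScpt.tendsto_subseq huball
    have hDu : Filter.Tendsto (fun n => D (u n)) Filter.atTop (nhds 0) := by
      apply squeeze_zero_norm (fun n => (huD n).le)
      exact tendsto_one_div_add_atTop_nhds_zero_nat
    have hDuφ : Filter.Tendsto (fun n => D (u (φ n))) Filter.atTop (nhds 0) :=
      hDu.comp hφ.tendsto_atTop
    have huconv : Filter.Tendsto (fun n => u (φ n)) Filter.atTop (nhds y) := by
      have heq : ∀ n, u (φ n) = D (u (φ n)) + K (u (φ n)) := by
        intro n
        simp [hD, sub_apply]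
      have := hDuφ.add hconv
      rw [zero_add] at this
      exact this.congr fun n => (heq n).symm
    have hyM : y ∈ M := by
      have hMclosed : IsClosed (M : Set G) := Submodule.isClosed_orthogonal N
      exact hMclosed.mem_of_tendsto huconv (Filter.Eventually.of_forall fun n => huM (φ n))
    have hy1 : ‖y‖ = 1 := by
      have h1 : Filter.Tendsto (fun n => ‖u (φ n)‖) Filter.atTop (nhds ‖y‖) :=
        (continuous_norm.tendsto y).comp huconv
      have h2 : (fun n => ‖u (φ n)‖) = fun _ => (1 : ℝ) := funext fun n => hu1 (φ n)
      rw [h2] at h1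
      exact (tendsto_nhds_unique tendsto_const_nhds h1).symm
    have hyN : y ∈ N := by
      have h1 : Filter.Tendsto (fun n => D (u (φ n))) Filter.atTop (nhds (D y)) :=
        (D.continuous.tendsto y).comp huconv
      have h0 : D y = 0 := tendsto_nhds_unique h1 hDuφ
      exact h0
    have hy0 : y = 0 := by
      have := hyM y hyN
      rwa [inner_self_eq_zero] at this
    rw [hy0, norm_zero] at hy1
    exact one_ne_zero hy1.symm
  obtain ⟨c, hc0, hc⟩ := hbb
  -- range D is closed
  set DM : M →L[ℂ] G := D.comp M.subtypeL with hDM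
  have hanti : AntilipschitzWith (⟨c, hc0.le⟩ : NNReal)⁻¹ ⇑DM := by
    apply DM.antilipschitz_of_bound
    intro x
    have h := hc (x : G) x.2
    have hx : ‖(x : G)‖ = ‖x‖ := rfl
    rw [hx] at h
    have : ‖DM x‖ = ‖D (x : G)‖ := rfl
    change ‖x‖ ≤ c⁻¹ * ‖DM x‖
    rw [this]
    rw [le_inv_mul_iff₀ hc0]
    linarith [h]
  have hclosedrange : IsClosed (Set.range ⇑DM) :=
    hanti.isClosed_range DM.uniformContinuous
  have hrange_eq : ((LinearMap.range D.toLinearMap : Submodule ℂ G) : Set G) = Set.range ⇑DM := by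
    ext z
    constructor
    · rintro ⟨x, rfl⟩
      obtain ⟨n, hn, m, hm, rfl⟩ := N.exists_add_mem_mem_orthogonal x
      refine ⟨⟨m, hm⟩, ?_⟩
      have hDn : D n = 0 := hn
      show D m = D (n + m)
      rw [map_add, hDn, zero_add]
    · rintro ⟨m, rfl⟩
      exact ⟨(m : G), rfl⟩
  set R : Submodule ℂ G := LinearMap.range D.toLinearMap with hR
  have hRclosed : IsClosed (R : Set G) := by rw [hrange_eq]; exact hclosedrange
  haveI : CompleteSpace R := hRclosed.completeSpace_coe
  have hcompl : IsCompl R Rᗮ := Submodule.isCompl_orthogonal_of_hasOrthogonalProjection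
  have hle : Rᗮ ≤ N := by
    intro x hx
    have h1 : ∀ v : G, ⟪v, D x⟫_ℂ = 0 := by
      intro v
      rw [← hsym]
      exact (Submodule.mem_orthogonal R x).mp hx (D v) ⟨v, rfl⟩
    have h2 := h1 (D x)
    rw [inner_self_eq_zero] at h2
    exact h2
  haveI : FiniteDimensional ℂ Rᗮ := Submodule.finiteDimensional_of_le hle
  exact Module.Finite.equiv (Submodule.quotientEquivOfIsCompl R Rᗮ hcompl).symm

end Aux

theorem stmt7 (P Q : H →L[ℂ] H) (hP1 : adjoint P = P) (hP2 : P * P = P)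
    (hQ1 : adjoint Q = Q) (hQ2 : Q * Q = Q)
    (hcpt : IsCompactOperator ⇑(P - Q)) :
    FiniteDimensional ℂ (LinearMap.ker (QPmap P Q)) ∧
    FiniteDimensional ℂ (↥(LinearMap.range (Q : H →ₗ[ℂ] H)) ⧸ LinearMap.range (QPmap P Q)) := by
  have hPfix : ∀ x : H, x ∈ LinearMap.range (P : H →ₗ[ℂ] H) → P x = x := by
    rintro _ ⟨y, rfl⟩
    calc P (P y) = (P * P) y := rfl
    _ = P y := by rw [hP2]
  have hQfix : ∀ x : H, x ∈ LinearMap.range (Q : H →ₗ[ℂ] H) → Q x = x := by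
    rintro _ ⟨y, rfl⟩
    calc Q (Q y) = (Q * Q) y := rfl
    _ = Q y := by rw [hQ2]
  constructor
  · -- kernel
    haveI hfd : FiniteDimensional ℂ (LinearMap.ker (1 - (P - Q)).toLinearMap) := aux_ker_fd _ hcpt
    let f : LinearMap.ker (QPmap P Q) →ₗ[ℂ] H :=
      (LinearMap.range (P : H →ₗ[ℂ] H)).subtype ∘ₗ (LinearMap.ker (QPmap P Q)).subtype
    have hfmem : ∀ x : LinearMap.ker (QPmap P Q), f x ∈ LinearMap.ker (1 - (P - Q)).toLinearMap := by
      intro x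
      have hx : QPmap P Q (x : LinearMap.range (P : H →ₗ[ℂ] H)) = 0 := x.2
      have hQx : Q ((x : LinearMap.range (P : H →ₗ[ℂ] H)) : H) = 0 := congrArg Subtype.val hx
      have hPx : P ((x : LinearMap.range (P : H →ₗ[ℂ] H)) : H) = ((x : LinearMap.range (P : H →ₗ[ℂ] H)) : H) :=
        hPfix _ (x : LinearMap.range (P : H →ₗ[ℂ] H)).2
      show (1 - (P - Q)) ((x : LinearMap.range (P : H →ₗ[ℂ] H)) : H) = 0
      simp [sub_apply, hPx, hQx]
    let g : LinearMap.ker (QPmap P Q) →ₗ[ℂ] LinearMap.ker (1 - (P - Q)).toLinearMap :=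
      f.codRestrict _ hfmem
    have hginj : Function.Injective g := by
      intro a b hab
      have h1 := Subtype.ext_iff.mp hab
      exact Subtype.ext (Subtype.ext h1)
    exact FiniteDimensional.of_injective g hginj
  · -- cokernel
    have hranQeq : (LinearMap.range (Q : H →ₗ[ℂ] H) : Submodule ℂ H) = LinearMap.ker (1 - Q).toLinearMap := by
      ext x
      constructor
      · intro hx
        show (1 - Q) x = 0
        simp [sub_apply, hQfix x hx]
      · intro hx
        have h : (1 - Q) x = 0 := hx
        have h' : x - Q x = 0 := by simpa using h
        rw [sub_eq_zero] at h'
        exact ⟨x, h'.symm⟩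
    have hranQclosed : IsClosed ((LinearMap.range (Q : H →ₗ[ℂ] H) : Submodule ℂ H) : Set H) := by
      rw [hranQeq]
      exact isClosed_ker (1 - Q)
    haveI : CompleteSpace (LinearMap.range (Q : H →ₗ[ℂ] H) : Submodule ℂ H) := hranQclosed.completeSpace_coe
    -- the compact operator C = restriction of Q(P-Q) to ran Q
    have hCmem : ∀ x : (LinearMap.range (Q : H →ₗ[ℂ] H) : Submodule ℂ H),
        ((Q.comp (P - Q)).comp (LinearMap.range (Q : H →ₗ[ℂ] H)).subtypeL) x ∈ LinearMap.range (Q : H →ₗ[ℂ] H) :=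
      fun x => LinearMap.mem_range_self (Q : H →ₗ[ℂ] H) ((P - Q) (x : H))
    set C : (LinearMap.range (Q : H →ₗ[ℂ] H) : Submodule ℂ H) →L[ℂ] (LinearMap.range (Q : H →ₗ[ℂ] H) : Submodule ℂ H) :=
      ((Q.comp (P - Q)).comp (LinearMap.range (Q : H →ₗ[ℂ] H)).subtypeL).codRestrict (LinearMap.range (Q : H →ₗ[ℂ] H))
        hCmem with hCdef
    have hCcoe : ∀ x : (LinearMap.range (Q : H →ₗ[ℂ] H) : Submodule ℂ H),
        ((C x : (LinearMap.range (Q : H →ₗ[ℂ] H) : Submodule ℂ H)) : H) = Q ((P - Q) x) := fun x => rfl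
    have hCcpt : IsCompactOperator ⇑C := by
      have h1 : IsCompactOperator ⇑(Q.comp (P - Q)) := hcpt.clm_comp Q
      have h2 : IsCompactOperator ⇑((Q.comp (P - Q)).comp (LinearMap.range (Q : H →ₗ[ℂ] H)).subtypeL) :=
        h1.comp_clm (LinearMap.range (Q : H →ₗ[ℂ] H)).subtypeL
      exact h2.codRestrict hCmem hranQclosed
    have hnegCcpt : IsCompactOperator ⇑(-C) := hCcpt.neg
    -- symmetry of 1 - (-C) = 1 + C
    have hadj : ∀ u v : H, ⟪Q u, v⟫_ℂ = ⟪u, Q v⟫_ℂ := by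
      intro u v
      conv_lhs => rw [← hQ1]
      exact adjoint_inner_left Q v u
    have hadjP : ∀ u v : H, ⟪P u, v⟫_ℂ = ⟪u, P v⟫_ℂ := by
      intro u v
      conv_lhs => rw [← hP1]
      exact adjoint_inner_left P v u
    have hadjPQ : ∀ u v : H, ⟪(P - Q) u, v⟫_ℂ = ⟪u, (P - Q) v⟫_ℂ := by
      intro u v
      rw [sub_apply, sub_apply, inner_sub_left, inner_sub_right, hadjP, hadj]
    have hsym : ∀ x y : (LinearMap.range (Q : H →ₗ[ℂ] H) : Submodule ℂ H),
        ⟪(1 - -C) x, y⟫_ℂ = ⟪x, (1 - -C) y⟫_ℂ := by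
      intro x y
      have hCs : ⟪C x, y⟫_ℂ = ⟪x, C y⟫_ℂ := by
        have l1 : ⟪C x, y⟫_ℂ = ⟪Q ((P - Q) (x : H)), (y : H)⟫_ℂ := rfl
        have l2 : ⟪x, C y⟫_ℂ = ⟪(x : H), Q ((P - Q) (y : H))⟫_ℂ := rfl
        rw [l1, l2, hadj, hQfix _ y.2, hadjPQ, ← hadj, hQfix _ x.2]
      have e1 : (1 - -C) x = x + C x := by simp
      have e2 : (1 - -C) y = y + C y := by simp
      rw [e1, e2, inner_add_left, inner_add_right, hCs]
    haveI hcoker : FiniteDimensional ℂ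
        ((LinearMap.range (Q : H →ₗ[ℂ] H) : Submodule ℂ H) ⧸ LinearMap.range (1 - -C).toLinearMap) :=
      aux_coker_fd (-C) hnegCcpt hsym
    -- range (1 + C) ≤ range QPmap
    have hle : LinearMap.range (1 - -C :
          (LinearMap.range (Q : H →ₗ[ℂ] H) : Submodule ℂ H) →L[ℂ] (LinearMap.range (Q : H →ₗ[ℂ] H) : Submodule ℂ H)).toLinearMap
        ≤ LinearMap.range (QPmap P Q) := by
      rintro _ ⟨y, rfl⟩
      refine ⟨⟨P (y : H), ⟨(y : H), rfl⟩⟩, ?_⟩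
      apply Subtype.ext
      show Q (P (y : H)) = (((1 - -C) y : (LinearMap.range (Q : H →ₗ[ℂ] H) : Submodule ℂ H)) : H)
      have h1 : (((1 - -C) y : (LinearMap.range (Q : H →ₗ[ℂ] H) : Submodule ℂ H)) : H)
          = (y : H) + Q ((P - Q) (y : H)) := by
        have : (1 - -C) y = y + C y := by simp
        rw [this]
        rfl
      rw [h1]
      have hQy : Q (y : H) = (y : H) := hQfix _ y.2
      simp [sub_apply, map_sub, hQy]
    -- surject the quotient
    let π : ((LinearMap.range (Q : H →ₗ[ℂ] H) : Submodule ℂ H) ⧸ LinearMap.range (1 - -C).toLinearMap) →ₗ[ℂ]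
        ((LinearMap.range (Q : H →ₗ[ℂ] H) : Submodule ℂ H) ⧸ LinearMap.range (QPmap P Q)) :=
      Submodule.mapQ _ _ LinearMap.id hle
    have hπsurj : Function.Surjective π := by
      intro z
      obtain ⟨y, rfl⟩ := Submodule.mkQ_surjective _ z
      exact ⟨Submodule.Quotient.mk y, rfl⟩
    exact FiniteDimensional.of_surjective π hπsurj
end
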